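/- Every fuzzy left ideal of an intra-regular AG-groupoid with left identity is fuzzy semiprime: μ(a) ≥ μ(a*a) for all a. -/
import Mathlib


/-- Every fuzzy left ideal of an intra-regular AG-groupoid with left
    identity is fuzzy semiprime. -/
theorem fuzzy_left_semiprime {S : Type*} (mul : S → S → S)
    (hinv : ∀ a b c : S, mul (mul a b) c = mul (mul c b) a)
    (e : S) (he : ∀ x : S, mul e x = x)
    (hintra : ∀ a : S, ∃ x y : S, a = mul (mul x (mul a a)) y)
    (μ : S → ℝ) (hμ0 : ∀ x, 0 ≤ μ x) (hμ1 : ∀ x, μ x ≤ 1)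
    (hleft : ∀ u v : S, μ v ≤ μ (mul u v)) :
    ∀ a : S, μ (mul a a) ≤ μ a := by
  have medial : ∀ a b c d : S, mul (mul a b) (mul c d) = mul (mul a c) (mul b d) := by
    intro a b c d
    rw [hinv a b (mul c d), hinv c d b, hinv (mul b d) c a]
  have swap : ∀ u v w : S, mul u (mul v w) = mul v (mul u w) := by
    intro u v w
    calc mul u (mul v w) = mul (mul e u) (mul v w) := by rw [he]
    _ = mul (mul e v) (mul u w) := medial _ _ _ _
    _ = mul v (mul u w) := by rw [he]
  have para : ∀ a b c d : S, mul (mul a b) (mul c d) = mul (mul d b) (mul c a) := by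
    intro a b c d
    calc mul (mul a b) (mul c d) = mul c (mul (mul a b) d) := swap _ _ _
    _ = mul c (mul (mul d b) a) := by rw [hinv a b d]
    _ = mul (mul e c) (mul (mul d b) a) := by rw [he]
    _ = mul (mul e (mul d b)) (mul c a) := medial _ _ _ _
    _ = mul (mul d b) (mul c a) := by rw [he]
  intro a
  obtain ⟨x, y, hxy⟩ := hintra a
  set z := mul (mul x e) y with hz
  have h1 : a = mul (mul a a) z := by
    rw [hz]
    calc a = mul (mul x (mul a a)) y := hxy
    _ = mul (mul x (mul a a)) (mul e y) := by rw [he]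
    _ = mul (mul x e) (mul (mul a a) y) := medial _ _ _ _
    _ = mul (mul a a) (mul (mul x e) y) := swap _ _ _
  have h2 : a = mul (mul z e) (mul a a) := by
    calc a = mul (mul a a) z := h1
    _ = mul (mul a a) (mul e z) := by rw [he]
    _ = mul (mul a e) (mul a z) := medial _ _ _ _
    _ = mul (mul z e) (mul a a) := para _ _ _ _
  calc μ (mul a a) ≤ μ (mul (mul z e) (mul a a)) := hleft _ _
  _ = μ a := by rw [← h2]
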